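/- Let A be an associative ℚ-algebra and V, ζ ∈ A with μ := −(1/2)[ζ,[V,ζ]] central in A. If L₂ = ∑_{k=0}^{N} S_k ζ^k is a polynomial in ζ with scalar coefficients S_k, then [V, L₂] = f'(ζ)[V,ζ] + f''(ζ) μ, where f'(ζ) = ∑_{k=1}^{N} k S_k ζ^{k−1} and f''(ζ) = ∑_{k=2}^{N} k(k−1) S_k ζ^{k−2}. -/

import Mathlib

/-- In an associative ℚ-algebra with `μ := −(1/2)[ζ,[V,ζ]]` central, for a
polynomial `L₂ = ∑_{k=0}^{N} S_k ζ^k` with scalar coefficients `S_k`,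
`[V, L₂] = f'(ζ)[V,ζ] + f''(ζ) μ` where `f'(ζ) = ∑_{k=1}^{N} k S_k ζ^(k−1)`
and `f''(ζ) = ∑_{k=2}^{N} k(k−1) S_k ζ^(k−2)`. -/
theorem stmt6 {A : Type*} [Ring A] [Algebra ℚ A] (V ζ μ : A) (N : ℕ) (S : ℕ → ℚ)
    (hμ : μ = -((1 : ℚ) / 2) •
      (ζ * (V * ζ - ζ * V) - (V * ζ - ζ * V) * ζ))
    (hcentral : ∀ a : A, μ * a = a * μ)
    (L₂ : A) (hL₂ : L₂ = ∑ k ∈ Finset.range (N + 1), S k • ζ ^ k) :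
    V * L₂ - L₂ * V =
      (∑ k ∈ Finset.Icc 1 N, ((k : ℚ) * S k) • ζ ^ (k - 1)) * (V * ζ - ζ * V)
        + (∑ k ∈ Finset.Icc 2 N, ((k : ℚ) * ((k : ℚ) - 1) * S k) • ζ ^ (k - 2)) * μ := by
  set W : A := V * ζ - ζ * V with hW
  have h2 : W * ζ = ζ * W + (2 : ℚ) • μ := by
    rw [hμ]; module
  -- commutator with ζ^(k+2)
  have key2 : ∀ k : ℕ, V * ζ ^ (k + 2) - ζ ^ (k + 2) * V =
      ((k : ℚ) + 2) • (ζ ^ (k + 1) * W) + (((k : ℚ) + 2) * ((k : ℚ) + 1)) • (ζ ^ k * μ) := by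
    intro k
    induction k with
    | zero =>
      have e : V * ζ ^ 2 - ζ ^ 2 * V = W * ζ + ζ * W := by
        rw [hW, pow_two]; noncomm_ring
      rw [e, h2]
      push_cast
      simp only [pow_one, pow_zero, one_mul]
      module
    | succ k ih =>
      have e : V * ζ ^ (k + 1 + 2) - ζ ^ (k + 1 + 2) * V =
          (V * ζ ^ (k + 2) - ζ ^ (k + 2) * V) * ζ + ζ ^ (k + 2) * W := by
        rw [hW, pow_succ (ζ) (k + 2)]; noncomm_ring
      rw [e, ih, add_mul, smul_mul_assoc, smul_mul_assoc, mul_assoc, mul_assoc, h2,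
        hcentral ζ]
      have e2 : ζ ^ (k + 1) * (ζ * W + (2 : ℚ) • μ) =
          ζ ^ (k + 2) * W + (2 : ℚ) • (ζ ^ (k + 1) * μ) := by
        rw [mul_add, ← mul_assoc, ← pow_succ, mul_smul_comm]
      have e3 : ζ ^ k * (ζ * μ) = ζ ^ (k + 1) * μ := by rw [← mul_assoc, ← pow_succ]
      rw [e2, e3]
      push_cast
      module
  have key : ∀ k : ℕ, V * ζ ^ k - ζ ^ k * V =
      (k : ℚ) • (ζ ^ (k - 1) * W) + ((k : ℚ) * ((k : ℚ) - 1)) • (ζ ^ (k - 2) * μ) := by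
    intro k
    match k with
    | 0 => simp
    | 1 => simp [hW]
    | (k + 2) =>
      have := key2 k
      push_cast
      have e : ((k : ℚ) + 2) * ((k : ℚ) + 2 - 1) = ((k : ℚ) + 2) * ((k : ℚ) + 1) := by ring
      simpa [e] using this
  -- both sides equal the same range sum
  have lhs : V * L₂ - L₂ * V =
      ∑ k ∈ Finset.range (N + 1),
        (((k : ℚ) * S k) • (ζ ^ (k - 1) * W)
          + ((k : ℚ) * ((k : ℚ) - 1) * S k) • (ζ ^ (k - 2) * μ)) := by
    rw [hL₂, Finset.mul_sum, Finset.sum_mul, ← Finset.sum_sub_distrib]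
    refine Finset.sum_congr rfl fun k _ => ?_
    rw [mul_smul_comm, smul_mul_assoc, ← smul_sub, key k]
    module
  rw [lhs]
  have sub1 : (∑ k ∈ Finset.Icc 1 N, ((k : ℚ) * S k) • ζ ^ (k - 1)) =
      ∑ k ∈ Finset.range (N + 1), ((k : ℚ) * S k) • ζ ^ (k - 1) := by
    apply Finset.sum_subset
    · intro k hk
      simp only [Finset.mem_Icc, Finset.mem_range] at *
      omega
    · intro k hk hk'
      simp only [Finset.mem_Icc, Finset.mem_range] at *
      have : k = 0 := by omega
      subst this; simp
  have sub2 : (∑ k ∈ Finset.Icc 2 N, ((k : ℚ) * ((k : ℚ) - 1) * S k) • ζ ^ (k - 2)) =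
      ∑ k ∈ Finset.range (N + 1), ((k : ℚ) * ((k : ℚ) - 1) * S k) • ζ ^ (k - 2) := by
    apply Finset.sum_subset
    · intro k hk
      simp only [Finset.mem_Icc, Finset.mem_range] at *
      omega
    · intro k hk hk'
      simp only [Finset.mem_Icc, Finset.mem_range] at *
      have hk01 : k = 0 ∨ k = 1 := by omega
      rcases hk01 with h | h <;> subst h <;> norm_num
  rw [sub1, sub2, Finset.sum_mul, Finset.sum_mul, ← Finset.sum_add_distrib]
  refine Finset.sum_congr rfl fun k _ => ?_
  rw [smul_mul_assoc, smul_mul_assoc]
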